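/- There exists a constant C > 0 with the following property. Define F₂(t) = ∫₁^t exp(−ν(γ₁(t) − γ₁(s))) f₂(s) ds for t ∈ [1,T], where f₂ : [1,T] → ℂ is continuous. Then sup_{t ∈ [1,T]} e^{a ν^{1/3} t} |F₂(t)| ≤ C ν^{−1/6} (∫₁^T e^{2 a ν^{1/3} s} |f₂(s)|² ds)^{1/2}, and ∫₁^T e^{2 a ν^{1/3} t} |F₂(t)|² dt ≤ C ν^{−2/3} ∫₁^T e^{2 a ν^{1/3} s} |f₂(s)|² ds. The constant C is independent of ν, T, a, k, l, η, f₂. -/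

import Mathlib

open MeasureTheory intervalIntegral Real

lemma deriv_cube (b u : ℝ) : HasDerivAt (fun u => (u-b)^3/3) ((u-b)^2) u := by
  have := (((hasDerivAt_id u).sub_const b).pow 3).div_const 3
  simp only [id_eq] at this
  exact this.congr_deriv (by norm_num)

lemma integral_sq (s t b : ℝ) : (∫ u in s..t, (u - b)^2) = ((t-b)^3 - (s-b)^3)/3 := by
  rw [intervalIntegral.integral_eq_sub_of_hasDerivAt (fun u _ => deriv_cube b u)]
  · ring
  · exact (Continuous.intervalIntegrable (by continuity) _ _)

lemma gamma_diff_lb {k l : ℤ} {η : ℝ} (hk : k ≠ 0) {γ γ₁ : ℝ → ℝ}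
    (hγ : ∀ t, γ t = (2 * Real.pi) ^ 2 * ((k : ℝ) ^ 2 + (η - (k : ℝ) * t) ^ 2 + (l : ℝ) ^ 2))
    (hγ₁ : ∀ t, γ₁ t = ∫ s in (1:ℝ)..t, γ s) :
    ∀ s t : ℝ, s ≤ t → 3*(t-s)^3 ≤ γ₁ t - γ₁ s := by
  have hγc : Continuous γ := by
    rw [show γ = _ from funext hγ]; continuity
  intro s t hst
  set b : ℝ := η / k with hb
  have hkR : (k:ℝ) ≠ 0 := Int.cast_ne_zero.2 hk
  have hk1 : (1:ℝ) ≤ (k:ℝ)^2 := by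
    have : (1:ℤ) ≤ k^2 := by rcases lt_or_gt_of_ne hk with h|h <;> nlinarith
    exact_mod_cast this
  have hdiff : γ₁ t - γ₁ s = ∫ u in s..t, γ u := by
    rw [hγ₁ t, hγ₁ s]
    exact intervalIntegral.integral_interval_sub_left
      (hγc.intervalIntegrable _ _) (hγc.intervalIntegrable _ _)
  have hpt : ∀ u ∈ Set.Icc s t, (2*Real.pi)^2 * (u - b)^2 ≤ γ u := by
    intro u _
    rw [hγ]
    have he : (η:ℝ) - (k:ℝ)*u = (k:ℝ)*(b - u) := by rw [hb]; field_simp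
    have h1 : (u - b)^2 ≤ (η - (k:ℝ)*u)^2 := by
      rw [he]; nlinarith [sq_nonneg (b - u)]
    have hl : (0:ℝ) ≤ (l:ℝ)^2 := sq_nonneg _
    have hk0 : (0:ℝ) ≤ (k:ℝ)^2 := sq_nonneg _
    nlinarith [sq_nonneg (2*Real.pi)]
  have hmono : (∫ u in s..t, (2*Real.pi)^2 * (u - b)^2) ≤ ∫ u in s..t, γ u :=
    intervalIntegral.integral_mono_on hst
      (Continuous.intervalIntegrable (by continuity) _ _)
      (hγc.intervalIntegrable _ _) hpt
  have hcomp : (∫ u in s..t, (2*Real.pi)^2 * (u - b)^2)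
      = (2*Real.pi)^2 * (((t-b)^3 - (s-b)^3)/3) := by
    rw [intervalIntegral.integral_const_mul, integral_sq]
  have hpi : (3:ℝ) < Real.pi := Real.pi_gt_three
  have hcube : (t-s)^3/4 ≤ (t-b)^3 - (s-b)^3 := by
    nlinarith [mul_nonneg (sq_nonneg (t+s-2*b)) (sub_nonneg.2 hst), sq_nonneg (t-s)]
  have h3 : (0:ℝ) ≤ (t-s)^3 := pow_nonneg (sub_nonneg.2 hst) 3
  have h9 : (9:ℝ) < Real.pi^2 := by nlinarith
  have hA : (2*Real.pi)^2 * ((t-s)^3/4) ≤ (2*Real.pi)^2 * ((t-b)^3-(s-b)^3) :=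
    mul_le_mul_of_nonneg_left hcube (sq_nonneg _)
  have hB : 3*(t-s)^3 ≤ (2*Real.pi)^2 * ((t-s)^3/4) / 3 := by
    nlinarith [mul_nonneg (le_of_lt (by nlinarith : (0:ℝ) < Real.pi^2-9)) h3]
  rw [hdiff]
  linarith

lemma five_x (x : ℝ) (hx : 0 ≤ x) : 5*x ≤ 3 + 3*x^3 := by
  nlinarith [mul_nonneg hx (sq_nonneg (x-1)), sq_nonneg (3*x-2)]

lemma kernel_bound {ν a μ s t D : ℝ} (hν : 0 < ν) (hμ : μ = ν^((1:ℝ)/3))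
    (ha4 : a ≤ 4) (hst : s ≤ t) (hD' : 3*(t-s)^3 ≤ D) :
    Real.exp (a*μ*t) * Real.exp (-(ν*D)) ≤
      Real.exp 3 * Real.exp (-(μ*(t-s))) * Real.exp (a*μ*s) := by
  rw [← Real.exp_add, ← Real.exp_add, ← Real.exp_add]
  apply Real.exp_le_exp.2
  have hμpos : 0 < μ := hμ ▸ Real.rpow_pos_of_pos hν _
  have hμ3 : μ^3 = ν := by
    rw [hμ, ← Real.rpow_natCast (ν ^ ((1:ℝ)/3)) 3, ← Real.rpow_mul hν.le]
    norm_num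
  set x := μ*(t-s) with hx
  have hx0 : 0 ≤ x := mul_nonneg hμpos.le (sub_nonneg.2 hst)
  have hνD : 3*x^3 ≤ ν*D := by
    have : 3*x^3 = ν * (3*(t-s)^3) := by rw [hx, ← hμ3]; ring
    rw [this]
    exact mul_le_mul_of_nonneg_left hD' hν.le
  have hax : a*μ*t - a*μ*s ≤ 4*x := by
    have : a*μ*t - a*μ*s = a*x := by rw [hx]; ring
    rw [this]
    exact mul_le_mul_of_nonneg_right ha4 hx0
  have := five_x x hx0
  linarith

lemma exp_integral {μ : ℝ} (hμ : 0 < μ) (t c : ℝ) :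
    (∫ s in c..t, Real.exp (-(μ*(t-s)))) ≤ 1/μ := by
  have h : ∀ u : ℝ, HasDerivAt (fun u => Real.exp (-(μ*(t-u)))/μ) (Real.exp (-(μ*(t-u)))) u := by
    intro u
    have hin : HasDerivAt (fun u : ℝ => -(μ*(t-u))) μ u := by
      have := ((hasDerivAt_id u).const_sub t).const_mul μ |>.neg
      simpa [Pi.neg_def] using this.congr_deriv (by ring)
    have := (Real.hasDerivAt_exp (-(μ*(t-u)))).comp u hin |>.div_const μ
    simpa using this.congr_deriv (by field_simp)
  rw [intervalIntegral.integral_eq_sub_of_hasDerivAt (fun u _ => h u)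
    ((Continuous.intervalIntegrable (by continuity) _ _))]
  simp only [sub_self, mul_zero, neg_zero, Real.exp_zero]
  have : 0 ≤ Real.exp (-(μ*(t-c)))/μ := by positivity
  linarith

lemma interval_CS {g h : ℝ → ℝ} (hg : Continuous g) (hh : Continuous h)
    (hg0 : ∀ x, 0 ≤ g x) (hh0 : ∀ x, 0 ≤ h x) {c t : ℝ} (hct : c ≤ t) :
    (∫ u in c..t, g u * h u) ≤
      (∫ u in c..t, g u ^ 2) ^ ((1:ℝ)/2) * (∫ u in c..t, h u ^ 2) ^ ((1:ℝ)/2) := by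
  rw [intervalIntegral.integral_of_le hct, intervalIntegral.integral_of_le hct,
    intervalIntegral.integral_of_le hct]
  have hpq : Real.HolderConjugate 2 2 := by constructor <;> norm_num
  have hmem : ∀ f : ℝ → ℝ, Continuous f →
      MemLp f (ENNReal.ofReal 2) (volume.restrict (Set.Ioc c t)) := by
    intro f hf
    obtain ⟨C, hC⟩ := (isCompact_Icc (a := c) (b := t)).exists_bound_of_continuousOn
      hf.continuousOn
    have : MemLp f ⊤ (volume.restrict (Set.Ioc c t)) := by
      apply memLp_top_of_bound hf.aestronglyMeasurable C
      refine (ae_restrict_iff' measurableSet_Ioc).2 (Filter.Eventually.of_forall ?_)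
      exact fun x hx => hC x (Set.Ioc_subset_Icc_self hx)
    exact this.mono_exponent le_top
  have := integral_mul_le_Lp_mul_Lq_of_nonneg (μ := volume.restrict (Set.Ioc c t)) hpq
    (Filter.Eventually.of_forall hg0) (Filter.Eventually.of_forall hh0)
    (hmem g hg) (hmem h hh)
  have h2 : ∀ x:ℝ, x ^ (2:ℝ) = x^2 := fun x => by
    rw [show (2:ℝ)=((2:ℕ):ℝ) by norm_num, Real.rpow_natCast]
  simp only [h2] at this
  convert this using 2

lemma sq_rpow_half {x : ℝ} (hx : 0 ≤ x) : (x ^ ((1:ℝ)/2))^2 = x := by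
  rw [← Real.rpow_natCast (x ^ ((1:ℝ)/2)) 2, ← Real.rpow_mul hx]; norm_num

theorem stmt6 : ∃ C : ℝ, 0 < C ∧ ∀ (ν T a : ℝ) (k l : ℤ) (η : ℝ) (f₂ : ℝ → ℂ),
    0 < ν → ν < 1 → 1 < T → 0 ≤ a → a ≤ 4 → k ≠ 0 →
    ContinuousOn f₂ (Set.Icc 1 T) →
    ∀ γ γ₁ : ℝ → ℝ,
    (∀ t, γ t = (2 * Real.pi) ^ 2 * ((k : ℝ) ^ 2 + (η - (k : ℝ) * t) ^ 2 + (l : ℝ) ^ 2)) →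
    (∀ t, γ₁ t = ∫ s in (1:ℝ)..t, γ s) →
    ∀ F₂ : ℝ → ℂ,
    (∀ t, F₂ t = ∫ s in (1:ℝ)..t,
        (Real.exp (-(ν * (γ₁ t - γ₁ s))) : ℂ) * f₂ s) →
    (∀ t ∈ Set.Icc (1:ℝ) T,
        Real.exp (a * ν ^ ((1:ℝ)/3) * t) * ‖F₂ t‖ ≤
          C * ν ^ (-(1:ℝ)/6) *
            (∫ s in (1:ℝ)..T,
              Real.exp (2 * a * ν ^ ((1:ℝ)/3) * s) * ‖f₂ s‖ ^ 2) ^ ((1:ℝ)/2)) ∧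
    (∫ t in (1:ℝ)..T, Real.exp (2 * a * ν ^ ((1:ℝ)/3) * t) * ‖F₂ t‖ ^ 2) ≤
        C * ν ^ (-(2:ℝ)/3) *
          ∫ s in (1:ℝ)..T, Real.exp (2 * a * ν ^ ((1:ℝ)/3) * s) * ‖f₂ s‖ ^ 2 := by
  refine ⟨Real.exp 6, Real.exp_pos 6, ?_⟩
  intro ν T a k l η f₂ hν hν1 hT ha0 ha4 hk hf γ γ₁ hγ hγ₁ F₂ hF₂
  have hT1 : (1:ℝ) ≤ T := hT.le
  set μ := ν ^ ((1:ℝ)/3) with hμdef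
  have hμpos : 0 < μ := Real.rpow_pos_of_pos hν _
  -- continuity of γ and γ₁
  have hγc : Continuous γ := by
    rw [show γ = _ from funext hγ]; continuity
  have hγ₁c : Continuous γ₁ := by
    rw [show γ₁ = _ from funext hγ₁]
    exact intervalIntegral.continuous_primitive (fun a b => hγc.intervalIntegrable a b) 1
  -- extension of f₂
  set p : ℝ → ℝ := fun s => max 1 (min s T) with hp
  have hpmem : ∀ s, p s ∈ Set.Icc (1:ℝ) T :=
    fun s => ⟨le_max_left _ _, max_le hT1 (min_le_right _ _)⟩
  set ft : ℝ → ℂ := fun s => f₂ (p s) with hft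
  have hftc : Continuous ft :=
    hf.comp_continuous (by fun_prop) hpmem
  have hfteq : ∀ s ∈ Set.Icc (1:ℝ) T, ft s = f₂ s := by
    intro s hs
    simp only [hft, hp]
    rw [min_eq_left hs.2, max_eq_right hs.1]
  set G : ℝ → ℝ := fun s => Real.exp (2*a*μ*s) * ‖ft s‖^2 with hG
  have hGc : Continuous G := by
    apply Continuous.mul (Real.continuous_exp.comp (by fun_prop))
    exact (hftc.norm).pow 2
  have hG0 : ∀ s, 0 ≤ G s := fun s => by positivity
  have hIeq : (∫ s in (1:ℝ)..T, Real.exp (2 * a * μ * s) * ‖f₂ s‖ ^ 2)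
      = ∫ s in (1:ℝ)..T, G s := by
    apply intervalIntegral.integral_congr
    intro s hs
    rw [Set.uIcc_of_le hT1] at hs
    simp only [hG]
    rw [hfteq s hs]
  have hIntG0 : 0 ≤ ∫ s in (1:ℝ)..T, G s :=
    intervalIntegral.integral_nonneg hT1 (fun u _ => hG0 u)
  have hΓ := gamma_diff_lb hk hγ hγ₁
  have hexp_sq : ∀ x : ℝ, Real.exp x ^ 2 = Real.exp (2*x) := by
    intro x; rw [pow_two, ← Real.exp_add, two_mul]
  -- the key pointwise bound
  have key : ∀ t ∈ Set.Icc (1:ℝ) T,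
      Real.exp (a*μ*t) * ‖F₂ t‖ ≤
        Real.exp 3 * ((1/μ) ^ ((1:ℝ)/2) *
          (∫ s in (1:ℝ)..t, Real.exp (-(μ*(t-s))) * G s) ^ ((1:ℝ)/2)) := by
    intro t ht
    obtain ⟨ht1, htT⟩ := ht
    -- Step A : bound the norm of F₂
    have hnorm : ‖F₂ t‖ ≤ ∫ s in (1:ℝ)..t, Real.exp (-(ν*(γ₁ t - γ₁ s))) * ‖ft s‖ := by
      rw [hF₂ t]
      refine (intervalIntegral.norm_integral_le_integral_norm ht1).trans_eq ?_
      apply intervalIntegral.integral_congr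
      intro s hs
      rw [Set.uIcc_of_le ht1] at hs
      show ‖(Real.exp (-(ν * (γ₁ t - γ₁ s))):ℂ) * f₂ s‖
          = Real.exp (-(ν * (γ₁ t - γ₁ s))) * ‖ft s‖
      rw [norm_mul, Complex.norm_real, Real.norm_eq_abs, abs_of_pos (Real.exp_pos _),
        hfteq s ⟨hs.1, hs.2.trans htT⟩]
    -- Step B : kernel bound inside the integral
    have hmain : Real.exp (a*μ*t) * ‖F₂ t‖ ≤
        ∫ s in (1:ℝ)..t, Real.exp 3 * Real.exp (-(μ*(t-s))) * (Real.exp (a*μ*s) * ‖ft s‖) := by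
      have h1 : Real.exp (a*μ*t) * ‖F₂ t‖ ≤
          ∫ s in (1:ℝ)..t, Real.exp (a*μ*t) * (Real.exp (-(ν*(γ₁ t - γ₁ s))) * ‖ft s‖) := by
        rw [intervalIntegral.integral_const_mul]
        exact mul_le_mul_of_nonneg_left hnorm (Real.exp_pos _).le
      refine h1.trans (intervalIntegral.integral_mono_on ht1 ?_ ?_ ?_)
      · apply Continuous.intervalIntegrable
        have : Continuous fun s => Real.exp (-(ν*(γ₁ t - γ₁ s))) := by fun_prop
        fun_prop
      · apply Continuous.intervalIntegrable
        fun_prop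
      · intro s hs
        have hker := kernel_bound hν hμdef ha4 hs.2 (hΓ s t hs.2)
        calc Real.exp (a*μ*t) * (Real.exp (-(ν*(γ₁ t - γ₁ s))) * ‖ft s‖)
            = (Real.exp (a*μ*t) * Real.exp (-(ν*(γ₁ t - γ₁ s)))) * ‖ft s‖ := by ring
          _ ≤ (Real.exp 3 * Real.exp (-(μ*(t-s))) * Real.exp (a*μ*s)) * ‖ft s‖ :=
              mul_le_mul_of_nonneg_right hker (norm_nonneg _)
          _ = Real.exp 3 * Real.exp (-(μ*(t-s))) * (Real.exp (a*μ*s) * ‖ft s‖) := by ring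
    -- Step C : Cauchy-Schwarz
    set g : ℝ → ℝ := fun s => Real.exp (-(μ*(t-s))/2) with hgdef
    set h : ℝ → ℝ := fun s => Real.exp (-(μ*(t-s))/2) * (Real.exp (a*μ*s) * ‖ft s‖) with hhdef
    have hgc : Continuous g := by fun_prop
    have hhc : Continuous h := by
      apply Continuous.mul (by fun_prop)
      exact Continuous.mul (by fun_prop) hftc.norm
    have hCS := interval_CS hgc hhc (fun x => (Real.exp_pos _).le)
      (fun x => mul_nonneg (Real.exp_pos _).le
        (mul_nonneg (Real.exp_pos _).le (norm_nonneg _))) ht1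
    have e1 : (∫ u in (1:ℝ)..t, g u * h u)
        = ∫ s in (1:ℝ)..t, Real.exp (-(μ*(t-s))) * (Real.exp (a*μ*s) * ‖ft s‖) := by
      apply intervalIntegral.integral_congr
      intro s _
      simp only [hgdef, hhdef]
      rw [← mul_assoc, ← Real.exp_add]
      congr 2
      ring
    have e2 : (∫ u in (1:ℝ)..t, g u ^ 2) = ∫ s in (1:ℝ)..t, Real.exp (-(μ*(t-s))) := by
      apply intervalIntegral.integral_congr
      intro s _
      simp only [hgdef, hexp_sq]
      congr 1
      ring
    have e3 : (∫ u in (1:ℝ)..t, h u ^ 2)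
        = ∫ s in (1:ℝ)..t, Real.exp (-(μ*(t-s))) * G s := by
      apply intervalIntegral.integral_congr
      intro s _
      simp only [hhdef, hG, mul_pow, hexp_sq]
      have h2 : Real.exp (2 * (a*μ*s)) = Real.exp (2*a*μ*s) := by congr 1; ring
      have h3 : Real.exp (2 * (-(μ*(t-s))/2)) = Real.exp (-(μ*(t-s))) := by congr 1; ring
      rw [h2, h3]
    rw [e1, e2, e3] at hCS
    have hg2 : (∫ s in (1:ℝ)..t, Real.exp (-(μ*(t-s)))) ^ ((1:ℝ)/2) ≤ (1/μ) ^ ((1:ℝ)/2) :=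
      Real.rpow_le_rpow
        (intervalIntegral.integral_nonneg ht1 (fun u _ => (Real.exp_pos _).le))
        (exp_integral hμpos t 1) (by norm_num)
    have hH0 : 0 ≤ (∫ s in (1:ℝ)..t, Real.exp (-(μ*(t-s))) * G s) ^ ((1:ℝ)/2) :=
      Real.rpow_nonneg (intervalIntegral.integral_nonneg ht1
        (fun u _ => mul_nonneg (Real.exp_pos _).le (hG0 u))) _
    calc Real.exp (a*μ*t) * ‖F₂ t‖
        ≤ ∫ s in (1:ℝ)..t, Real.exp 3 * Real.exp (-(μ*(t-s))) * (Real.exp (a*μ*s) * ‖ft s‖) :=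
          hmain
      _ = Real.exp 3 * ∫ s in (1:ℝ)..t, Real.exp (-(μ*(t-s))) * (Real.exp (a*μ*s) * ‖ft s‖) := by
          rw [← intervalIntegral.integral_const_mul]
          apply intervalIntegral.integral_congr
          intro s _
          ring
      _ ≤ Real.exp 3 * ((1/μ) ^ ((1:ℝ)/2) *
            (∫ s in (1:ℝ)..t, Real.exp (-(μ*(t-s))) * G s) ^ ((1:ℝ)/2)) := by
          apply mul_le_mul_of_nonneg_left _ (Real.exp_pos _).le
          exact hCS.trans (mul_le_mul_of_nonneg_right hg2 hH0)
  have hpow1 : (1/μ) ^ ((1:ℝ)/2) = ν ^ (-(1:ℝ)/6) := by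
    rw [hμdef, one_div, ← Real.rpow_neg hν.le, ← Real.rpow_mul hν.le]
    norm_num
  have hpow2 : (1/μ) * (1/μ) = ν ^ (-(2:ℝ)/3) := by
    rw [hμdef, one_div, ← Real.rpow_neg hν.le, ← Real.rpow_add hν]
    norm_num
  have hkerc : ∀ t : ℝ, Continuous fun s => Real.exp (-(μ*(t-s))) * G s := by
    intro t
    exact Continuous.mul (by fun_prop) hGc
  constructor
  · -- sup bound
    intro t ht
    have hk1 := key t ht
    have hH0 : 0 ≤ ∫ s in (1:ℝ)..t, Real.exp (-(μ*(t-s))) * G s :=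
      intervalIntegral.integral_nonneg ht.1
        (fun u _ => mul_nonneg (Real.exp_pos _).le (hG0 u))
    have hmono1 : (∫ s in (1:ℝ)..t, Real.exp (-(μ*(t-s))) * G s)
        ≤ ∫ s in (1:ℝ)..T, G s := by
      have step1 : (∫ s in (1:ℝ)..t, Real.exp (-(μ*(t-s))) * G s)
          ≤ ∫ s in (1:ℝ)..t, G s := by
        apply intervalIntegral.integral_mono_on ht.1
          ((hkerc t).intervalIntegrable _ _) (hGc.intervalIntegrable _ _)
        intro s hs
        have h1 : Real.exp (-(μ*(t-s))) ≤ 1 :=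
          Real.exp_le_one_iff.2 (by nlinarith [mul_nonneg hμpos.le (sub_nonneg.2 hs.2)])
        exact mul_le_of_le_one_left (hG0 s) h1
      have step2 : (∫ s in (1:ℝ)..t, G s) ≤ ∫ s in (1:ℝ)..T, G s :=
        intervalIntegral.integral_mono_interval le_rfl ht.1 ht.2
          (Filter.Eventually.of_forall (fun u => hG0 u)) (hGc.intervalIntegrable _ _)
      linarith
    rw [hIeq]
    calc Real.exp (a*μ*t) * ‖F₂ t‖
        ≤ Real.exp 3 * ((1/μ) ^ ((1:ℝ)/2) *
            (∫ s in (1:ℝ)..t, Real.exp (-(μ*(t-s))) * G s) ^ ((1:ℝ)/2)) := hk1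
      _ ≤ Real.exp 3 * ((1/μ) ^ ((1:ℝ)/2) * (∫ s in (1:ℝ)..T, G s) ^ ((1:ℝ)/2)) := by
          apply mul_le_mul_of_nonneg_left _ (Real.exp_pos _).le
          exact mul_le_mul_of_nonneg_left
            (Real.rpow_le_rpow hH0 hmono1 (by norm_num))
            (Real.rpow_nonneg (by positivity) _)
      _ = Real.exp 3 * ν ^ (-(1:ℝ)/6) * (∫ s in (1:ℝ)..T, G s) ^ ((1:ℝ)/2) := by
          rw [hpow1]; ring
      _ ≤ Real.exp 6 * ν ^ (-(1:ℝ)/6) * (∫ s in (1:ℝ)..T, G s) ^ ((1:ℝ)/2) := by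
          apply mul_le_mul_of_nonneg_right _ (Real.rpow_nonneg hIntG0 _)
          exact mul_le_mul_of_nonneg_right
            (Real.exp_le_exp.2 (by norm_num)) (Real.rpow_nonneg hν.le _)
  · -- L² bound
    set J : ℝ → ℝ := fun t => ∫ s in (1:ℝ)..t, Real.exp (μ*s) * G s with hJ
    have hJGc : Continuous fun s => Real.exp (μ*s) * G s := Continuous.mul (by fun_prop) hGc
    have hJc : Continuous J :=
      intervalIntegral.continuous_primitive (fun a b => hJGc.intervalIntegrable a b) 1
    set H : ℝ → ℝ := fun t => ∫ s in (1:ℝ)..t, Real.exp (-(μ*(t-s))) * G s with hH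
    have hHeq : ∀ t, H t = Real.exp (-(μ*t)) * J t := by
      intro t
      show (∫ s in (1:ℝ)..t, Real.exp (-(μ*(t-s))) * G s)
          = Real.exp (-(μ*t)) * ∫ s in (1:ℝ)..t, Real.exp (μ*s) * G s
      rw [← intervalIntegral.integral_const_mul]
      apply intervalIntegral.integral_congr
      intro s _
      show Real.exp (-(μ*(t-s))) * G s = Real.exp (-(μ*t)) * (Real.exp (μ*s) * G s)
      have hme : Real.exp (-(μ*t)) * Real.exp (μ*s) = Real.exp (-(μ*(t-s))) := by
        rw [← Real.exp_add]; congr 1; ring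
      rw [← hme]; ring
    have hHc : Continuous H := by
      rw [show H = fun t => Real.exp (-(μ*t)) * J t from funext hHeq]
      exact Continuous.mul (by fun_prop) hJc
    have hH0' : ∀ t, 1 ≤ t → 0 ≤ H t := fun t ht =>
      intervalIntegral.integral_nonneg ht
        (fun u _ => mul_nonneg (Real.exp_pos _).le (hG0 u))
    -- continuity of F₂ on [1,T]
    set W : ℝ → ℂ := fun t => (Real.exp (-(ν * γ₁ t)) : ℂ) *
      ∫ s in (1:ℝ)..t, (Real.exp (ν * γ₁ s) : ℂ) * ft s with hW
    have hWic : Continuous fun s => (Real.exp (ν * γ₁ s) : ℂ) * ft s := by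
      apply Continuous.mul _ hftc
      exact Complex.continuous_ofReal.comp (Real.continuous_exp.comp (by fun_prop))
    have hWc : Continuous W := by
      apply Continuous.mul
      · exact Complex.continuous_ofReal.comp (Real.continuous_exp.comp (by fun_prop))
      · exact intervalIntegral.continuous_primitive
          (fun a b => hWic.intervalIntegrable a b) 1
    have hFW : ∀ t ∈ Set.Icc (1:ℝ) T, F₂ t = W t := by
      intro t ht
      rw [hF₂ t]
      simp only [hW]
      rw [← intervalIntegral.integral_const_mul]
      apply intervalIntegral.integral_congr
      intro s hs
      rw [Set.uIcc_of_le ht.1] at hs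
      show (Real.exp (-(ν * (γ₁ t - γ₁ s))) : ℂ) * f₂ s
          = (Real.exp (-(ν * γ₁ t)) : ℂ) * ((Real.exp (ν * γ₁ s) : ℂ) * ft s)
      rw [hfteq s ⟨hs.1, hs.2.trans ht.2⟩, ← mul_assoc, ← Complex.ofReal_mul, ← Real.exp_add]
      congr 3
      ring
    have hFcont : ContinuousOn F₂ (Set.Icc 1 T) := hWc.continuousOn.congr hFW
    have hLHScont : ContinuousOn (fun t => Real.exp (2*a*μ*t) * ‖F₂ t‖^2) (Set.Icc 1 T) :=
      ContinuousOn.mul (Continuous.continuousOn (by fun_prop)) ((hFcont.norm).pow 2)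
    -- pointwise squared bound
    have hsq : ∀ t ∈ Set.Icc (1:ℝ) T,
        Real.exp (2*a*μ*t) * ‖F₂ t‖^2 ≤ Real.exp 6 * (1/μ) * H t := by
      intro t ht
      have hk1 := key t ht
      have h0 : 0 ≤ Real.exp (a*μ*t) * ‖F₂ t‖ :=
        mul_nonneg (Real.exp_pos _).le (norm_nonneg _)
      have hsq' := pow_le_pow_left₀ h0 hk1 2
      calc Real.exp (2*a*μ*t) * ‖F₂ t‖^2
          = (Real.exp (a*μ*t) * ‖F₂ t‖)^2 := by
            rw [mul_pow, hexp_sq]; congr 2; ring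
        _ ≤ (Real.exp 3 * ((1/μ) ^ ((1:ℝ)/2) * (H t) ^ ((1:ℝ)/2)))^2 := hsq'
        _ = Real.exp 6 * (1/μ) * H t := by
            rw [mul_pow, mul_pow, hexp_sq, sq_rpow_half (by positivity : (0:ℝ) ≤ 1/μ),
              sq_rpow_half (hH0' t ht.1)]
            norm_num
            ring
    have hmono2 : (∫ t in (1:ℝ)..T, Real.exp (2*a*μ*t) * ‖F₂ t‖^2)
        ≤ ∫ t in (1:ℝ)..T, Real.exp 6 * (1/μ) * H t := by
      apply intervalIntegral.integral_mono_on hT1 _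
        ((Continuous.mul continuous_const hHc).intervalIntegrable _ _) hsq
      apply ContinuousOn.intervalIntegrable
      rw [Set.uIcc_of_le hT1]
      exact hLHScont
    -- integration by parts for ∫ H
    have hJd : ∀ t : ℝ, HasDerivAt J (Real.exp (μ*t) * G t) t := fun t =>
      intervalIntegral.integral_hasDerivAt_right (hJGc.intervalIntegrable _ _)
        hJGc.stronglyMeasurable.stronglyMeasurableAtFilter hJGc.continuousAt
    have hPd : ∀ t : ℝ, HasDerivAt (fun u => ∫ s in (1:ℝ)..u, G s) (G t) t := fun t =>
      intervalIntegral.integral_hasDerivAt_right (hGc.intervalIntegrable _ _)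
        hGc.stronglyMeasurable.stronglyMeasurableAtFilter hGc.continuousAt
    set Φ : ℝ → ℝ := fun t => -(Real.exp (-(μ*t)) * J t)/μ + (1/μ) * ∫ s in (1:ℝ)..t, G s
      with hΦ
    have hΦd : ∀ t : ℝ, HasDerivAt Φ (H t) t := by
      intro t
      have h1 : HasDerivAt (fun t : ℝ => Real.exp (-(μ*t))) (-μ * Real.exp (-(μ*t))) t := by
        have hin : HasDerivAt (fun t : ℝ => -(μ*t)) (-μ) t := by
          have := ((hasDerivAt_id t).const_mul μ).neg
          simpa [Pi.neg_def] using this.congr_deriv (by ring)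
        have := (Real.hasDerivAt_exp (-(μ*t))).comp t hin
        simpa [Function.comp_def] using this.congr_deriv (by ring)
      have h3 := ((h1.mul (hJd t)).neg.div_const μ).add ((hPd t).const_mul (1/μ))
      apply h3.congr_deriv
      rw [hHeq t]
      have hee : Real.exp (-(μ*t)) * Real.exp (μ*t) = 1 := by
        rw [← Real.exp_add]; simp
      field_simp
      linear_combination (-(G t)) * hee
    have hibp : (∫ t in (1:ℝ)..T, H t) = Φ T - Φ 1 :=
      intervalIntegral.integral_eq_sub_of_hasDerivAt (fun u _ => hΦd u)
        (hHc.intervalIntegrable _ _)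
    have hJT0 : 0 ≤ J T :=
      intervalIntegral.integral_nonneg hT1
        (fun u _ => mul_nonneg (Real.exp_pos _).le (hG0 u))
    have hHbound : (∫ t in (1:ℝ)..T, H t) ≤ (1/μ) * ∫ s in (1:ℝ)..T, G s := by
      rw [hibp]
      have hJ10 : J 1 = 0 := intervalIntegral.integral_same
      simp only [hΦ, hJ10, intervalIntegral.integral_same, mul_zero, zero_div, neg_zero,
        add_zero, sub_zero]
      have hpos : -(Real.exp (-(μ*T)) * J T) / μ ≤ 0 :=
        div_nonpos_of_nonpos_of_nonneg
          (neg_nonpos.mpr (mul_nonneg (Real.exp_pos _).le hJT0)) hμpos.le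
      linarith
    -- finish
    rw [hIeq]
    calc (∫ t in (1:ℝ)..T, Real.exp (2*a*μ*t) * ‖F₂ t‖^2)
        ≤ ∫ t in (1:ℝ)..T, Real.exp 6 * (1/μ) * H t := hmono2
      _ = Real.exp 6 * (1/μ) * ∫ t in (1:ℝ)..T, H t := by
          rw [intervalIntegral.integral_const_mul]
      _ ≤ Real.exp 6 * (1/μ) * ((1/μ) * ∫ s in (1:ℝ)..T, G s) := by
          apply mul_le_mul_of_nonneg_left hHbound (by positivity)
      _ = Real.exp 6 * ν ^ (-(2:ℝ)/3) * ∫ s in (1:ℝ)..T, G s := by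
          rw [← hpow2]; ring
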